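/- (Lemma 1(a)) Let V : [0,L] → ℝ be twice continuously differentiable, satisfy λ²·V''(s) = V(s) + b·g(V(s)) for all s ∈ [0,L], with boundary values V(0) = V₀ and V(L) = V_L satisfying V₀·V_L ≥ 0. Then there exist constants c₁, c₂ ∈ ℝ and λ̂ > 0 such that V(s) = c₁·exp(s/λ̂) + c₂·exp(−s/λ̂) for all s ∈ [0,L]. Specifically, if V₀ ≥ 0 and V_L ≥ 0 one may take λ̂ = λ/√(1+b), and if V₀ ≤ 0 and V_L ≤ 0 one may take λ̂ = λ. -/

import Mathlib

open Set

private lemma ode_zero (L k : ℝ) (W W' : ℝ → ℝ)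
    (hW : ∀ s ∈ Icc (0:ℝ) L, HasDerivWithinAt W (W' s) (Icc (0:ℝ) L) s)
    (hW' : ∀ s ∈ Icc (0:ℝ) L, HasDerivWithinAt W' (k ^ 2 * W s) (Icc (0:ℝ) L) s)
    (h0 : W 0 = 0) (h0' : W' 0 = 0) : ∀ s ∈ Icc (0:ℝ) L, W s = 0 := by
  set C : ℝ := 1 + k ^ 2 with hC
  have hCpos : 0 < C := by positivity
  set F : ℝ → ℝ := fun s => (W s * W s + W' s * W' s) * Real.exp (-C * s) with hF
  have hexp : ∀ s : ℝ, HasDerivAt (fun x => Real.exp (-C * x)) (-C * Real.exp (-C * s)) s := by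
    intro s
    have h := ((hasDerivAt_id s).const_mul (-C)).exp
    simpa [mul_comm] using h
  have hFd : ∀ s ∈ Icc (0:ℝ) L, HasDerivWithinAt F
      (((W' s * W s + W s * W' s) + ((k ^ 2 * W s) * W' s + W' s * (k ^ 2 * W s)))
          * Real.exp (-C * s)
        + (W s * W s + W' s * W' s) * (-C * Real.exp (-C * s))) (Icc (0:ℝ) L) s := by
    intro s hs
    exact (((hW s hs).mul (hW s hs)).add ((hW' s hs).mul (hW' s hs))).mul
      ((hexp s).hasDerivWithinAt)
  have hanti : AntitoneOn F (Icc (0:ℝ) L) := by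
    apply antitoneOn_of_hasDerivWithinAt_nonpos (convex_Icc 0 L)
      (fun x hx => (hFd x hx).continuousWithinAt)
      (fun x hx => ((hFd x (interior_subset hx)).mono interior_subset))
    intro x hx
    rw [hC]
    nlinarith [mul_nonneg (mul_nonneg (show (0:ℝ) ≤ 1 + k ^ 2 by positivity)
      (Real.exp_pos (-(1 + k ^ 2) * x)).le) (sq_nonneg (W x - W' x))]
  intro s hs
  have h0mem : (0:ℝ) ∈ Icc (0:ℝ) L := ⟨le_refl 0, le_trans hs.1 hs.2⟩
  have hle : F s ≤ F 0 := hanti h0mem hs hs.1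
  have hF0 : F 0 = 0 := by simp [hF, h0, h0']
  have hge : 0 ≤ F s := by
    apply mul_nonneg _ (Real.exp_pos _).le
    nlinarith [mul_self_nonneg (W s), mul_self_nonneg (W' s)]
  have : F s = 0 := le_antisymm (hF0 ▸ hle) hge
  have hE : W s * W s + W' s * W' s = 0 := by
    have hne : Real.exp (-C * s) ≠ 0 := (Real.exp_pos _).ne'
    exact by
      have := this
      simp only [hF, mul_eq_zero] at this
      tauto
  nlinarith [mul_self_nonneg (W s), mul_self_nonneg (W' s)]

private lemma max_principle (L μ : ℝ) (hμ : 0 ≤ μ) (V V' V'' : ℝ → ℝ)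
    (hV : ∀ s ∈ Icc (0:ℝ) L, HasDerivWithinAt V (V' s) (Icc (0:ℝ) L) s)
    (hV' : ∀ s ∈ Icc (0:ℝ) L, HasDerivWithinAt V' (V'' s) (Icc (0:ℝ) L) s)
    (hODE : ∀ s ∈ Icc (0:ℝ) L, V s ≤ 0 → V'' s = μ * V s)
    (h0 : 0 ≤ V 0) (hLv : 0 ≤ V L) : ∀ s ∈ Icc (0:ℝ) L, 0 ≤ V s := by
  by_contra hcon
  push_neg at hcon
  obtain ⟨s₀, hs₀, hneg⟩ := hcon
  have hcont : ContinuousOn V (Icc 0 L) := fun x hx => (hV x hx).continuousWithinAt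
  -- largest "nonneg" point left of s₀
  set A : Set ℝ := Icc 0 s₀ ∩ V ⁻¹' Ici 0 with hA
  have hAsub : Icc (0:ℝ) s₀ ⊆ Icc 0 L := Icc_subset_Icc (le_refl _) hs₀.2
  have hAclosed : IsClosed A := (hcont.mono hAsub).preimage_isClosed_of_isClosed
    isClosed_Icc isClosed_Ici
  have hAne : A.Nonempty := ⟨0, ⟨le_refl 0, hs₀.1⟩, h0⟩
  have hAbdd : BddAbove A := ⟨s₀, fun x hx => hx.1.2⟩
  set a : ℝ := sSup A with ha
  have haA : a ∈ A := hAclosed.csSup_mem hAne hAbdd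
  have hVa : 0 ≤ V a := haA.2
  have ha0 : 0 ≤ a := haA.1.1
  have has₀ : a < s₀ := lt_of_le_of_ne haA.1.2 (fun h => by rw [h] at hVa; linarith)
  have hleft : ∀ t, a < t → t ≤ s₀ → V t < 0 := by
    intro t hat hts
    by_contra h
    push_neg at h
    exact absurd (le_csSup hAbdd (⟨⟨le_trans ha0 hat.le, hts⟩, h⟩ : t ∈ A)) (not_le.mpr hat)
  -- smallest "nonneg" point right of s₀
  set B : Set ℝ := Icc s₀ L ∩ V ⁻¹' Ici 0 with hB
  have hBsub : Icc s₀ L ⊆ Icc 0 L := Icc_subset_Icc hs₀.1 (le_refl _)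
  have hBclosed : IsClosed B := (hcont.mono hBsub).preimage_isClosed_of_isClosed
    isClosed_Icc isClosed_Ici
  have hBne : B.Nonempty := ⟨L, ⟨hs₀.2, le_refl L⟩, hLv⟩
  have hBbdd : BddBelow B := ⟨s₀, fun x hx => hx.1.1⟩
  set c : ℝ := sInf B with hc
  have hcB : c ∈ B := hBclosed.csInf_mem hBne hBbdd
  have hVc : 0 ≤ V c := hcB.2
  have hcL : c ≤ L := hcB.1.2
  have hs₀c : s₀ < c := lt_of_le_of_ne hcB.1.1 (fun h => by rw [← h] at hVc; linarith)
  have hright : ∀ t, s₀ ≤ t → t < c → V t < 0 := by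
    intro t hst htc
    by_contra h
    push_neg at h
    exact absurd (csInf_le hBbdd (⟨⟨hst, le_trans htc.le hcL⟩, h⟩ : t ∈ B)) (not_le.mpr htc)
  have hac : a < c := lt_trans has₀ hs₀c
  have hsub : Icc a c ⊆ Icc 0 L := Icc_subset_Icc ha0 hcL
  have hint : interior (Icc a c) = Ioo a c := interior_Icc
  have hIoo : Ioo a c ⊆ Icc 0 L := fun x hx => hsub (Ioo_subset_Icc_self hx)
  have hnegIoo : ∀ x ∈ Ioo a c, V x < 0 := by
    intro x hx
    rcases le_or_gt x s₀ with h | h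
    · exact hleft x hx.1 h
    · exact hright x h.le hx.2
  have hconc : ConcaveOn ℝ (Icc a c) V := by
    apply concaveOn_of_hasDerivWithinAt2_nonpos (convex_Icc a c) (hcont.mono hsub)
      (f' := V') (f'' := V'')
    · intro x hx
      rw [hint] at hx ⊢
      exact (hV x (hIoo hx)).mono hIoo
    · intro x hx
      rw [hint] at hx ⊢
      exact (hV' x (hIoo hx)).mono hIoo
    · intro x hx
      rw [hint] at hx
      have hVx := hnegIoo x hx
      rw [hODE x (hIoo hx) hVx.le]
      exact mul_nonpos_of_nonneg_of_nonpos hμ hVx.le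
  have hseg : s₀ ∈ segment ℝ a c := by
    rw [segment_eq_Icc hac.le]
    exact ⟨has₀.le, hs₀c.le⟩
  have := hconc.ge_on_segment (left_mem_Icc.mpr hac.le) (right_mem_Icc.mpr hac.le) hseg
  have hmin : (0:ℝ) ≤ min (V a) (V c) := le_min hVa hVc
  linarith

private lemma solve_linear (L k : ℝ) (hk : 0 < k) (V V' V'' : ℝ → ℝ)
    (hV : ∀ s ∈ Icc (0:ℝ) L, HasDerivWithinAt V (V' s) (Icc (0:ℝ) L) s)
    (hV' : ∀ s ∈ Icc (0:ℝ) L, HasDerivWithinAt V' (V'' s) (Icc (0:ℝ) L) s)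
    (hODE : ∀ s ∈ Icc (0:ℝ) L, V'' s = k ^ 2 * V s) :
    ∃ c₁ c₂ : ℝ, ∀ s ∈ Icc (0:ℝ) L,
      V s = c₁ * Real.exp (k * s) + c₂ * Real.exp (-(k * s)) := by
  have hk0 : k ≠ 0 := hk.ne'
  set c₁ : ℝ := (V 0 + V' 0 / k) / 2 with hc₁
  set c₂ : ℝ := (V 0 - V' 0 / k) / 2 with hc₂
  have hexp : ∀ (c s : ℝ), HasDerivAt (fun x => Real.exp (c * x)) (c * Real.exp (c * s)) s := by
    intro c s
    have h := ((hasDerivAt_id s).const_mul c).exp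
    simpa [mul_comm] using h
  set f : ℝ → ℝ := fun s => c₁ * Real.exp (k * s) + c₂ * Real.exp (-k * s) with hf
  set g : ℝ → ℝ := fun s => c₁ * (k * Real.exp (k * s)) + c₂ * (-k * Real.exp (-k * s)) with hg
  have hfd : ∀ s : ℝ, HasDerivAt f (g s) s := fun s =>
    ((hexp k s).const_mul c₁).add ((hexp (-k) s).const_mul c₂)
  have hgd : ∀ s : ℝ, HasDerivAt g (k ^ 2 * f s) s := by
    intro s
    have h := (((hexp k s).const_mul k).const_mul c₁).add
      (((hexp (-k) s).const_mul (-k)).const_mul c₂)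
    refine h.congr_deriv ?_
    simp only [hf]
    ring
  have key := ode_zero L k (fun s => V s - f s) (fun s => V' s - g s)
    (fun s hs => (hV s hs).sub (hfd s).hasDerivWithinAt)
    (fun s hs => by
      have h := (hV' s hs).sub (hgd s).hasDerivWithinAt
      have : V'' s - k ^ 2 * f s = k ^ 2 * (V s - f s) := by rw [hODE s hs]; ring
      rwa [this] at h)
    (by simp only [hf, mul_zero, neg_zero, Real.exp_zero, mul_one, hc₁, hc₂]; ring)
    (by
      simp only [hg, mul_zero, neg_zero, Real.exp_zero, mul_one, hc₁, hc₂]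
      field_simp
      ring)
  refine ⟨c₁, c₂, fun s hs => ?_⟩
  have hz : V s - f s = 0 := key s hs
  have hVf : V s = f s := by linarith
  rw [hVf]
  simp only [hf, neg_mul]


/-- Lemma 1(a): if the boundary values of a solution of the cable equilibrium equation
`λ² V''(s) = V(s) + b·max(V(s), 0)` satisfy `V₀ · V_L ≥ 0`, then
`V(s) = c₁ exp(s/λ̂) + c₂ exp(−s/λ̂)` on `[0, L]` for some constants `c₁, c₂` and some
`λ̂ > 0`; specifically one may take `λ̂ = λ/√(1+b)` when both boundary values are
nonnegative, and `λ̂ = λ` when both boundary values are nonpositive. -/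
theorem cable_equilibrium_same_sign_boundary
    (lam L b : ℝ) (hlam : 0 < lam) (hL : 0 < L) (hb : 0 ≤ b)
    (V V' V'' : ℝ → ℝ)
    (hV : ∀ s ∈ Icc 0 L, HasDerivWithinAt V (V' s) (Icc 0 L) s)
    (hV' : ∀ s ∈ Icc 0 L, HasDerivWithinAt V' (V'' s) (Icc 0 L) s)
    (hV''cont : ContinuousOn V'' (Icc 0 L))
    (hODE : ∀ s ∈ Icc 0 L, lam ^ 2 * V'' s = V s + b * max (V s) 0)
    (V₀ VL : ℝ) (hbc0 : V 0 = V₀) (hbcL : V L = VL)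
    (hsign : V₀ * VL ≥ 0) :
    (∃ c₁ c₂ lamhat : ℝ, 0 < lamhat ∧
      ∀ s ∈ Icc 0 L,
        V s = c₁ * Real.exp (s / lamhat) + c₂ * Real.exp (-(s / lamhat))) ∧
    (0 ≤ V₀ → 0 ≤ VL → ∃ c₁ c₂ : ℝ,
      ∀ s ∈ Icc 0 L,
        V s = c₁ * Real.exp (s / (lam / Real.sqrt (1 + b))) +
          c₂ * Real.exp (-(s / (lam / Real.sqrt (1 + b))))) ∧
    (V₀ ≤ 0 → VL ≤ 0 → ∃ c₁ c₂ : ℝ,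
      ∀ s ∈ Icc 0 L,
        V s = c₁ * Real.exp (s / lam) + c₂ * Real.exp (-(s / lam))) := by
  subst hbc0 hbcL
  have hlamsq : (0:ℝ) < lam ^ 2 := by positivity
  have h1b : (0:ℝ) < 1 + b := by linarith
  have hsq : 0 < Real.sqrt (1 + b) := Real.sqrt_pos.mpr h1b
  have hsqsq : Real.sqrt (1 + b) ^ 2 = 1 + b := Real.sq_sqrt h1b.le
  -- the nonnegative-boundary case
  have hpos_case : 0 ≤ V 0 → 0 ≤ V L → ∃ c₁ c₂ : ℝ, ∀ s ∈ Icc (0:ℝ) L,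
      V s = c₁ * Real.exp (s / (lam / Real.sqrt (1 + b))) +
        c₂ * Real.exp (-(s / (lam / Real.sqrt (1 + b)))) := by
    intro h0 hLv
    have hsgn : ∀ s ∈ Icc (0:ℝ) L, 0 ≤ V s := by
      apply max_principle L (1 / lam ^ 2) (by positivity) V V' V'' hV hV' _ h0 hLv
      intro s hs hle
      have h := hODE s hs
      rw [max_eq_right hle] at h
      field_simp
      linarith
    set k : ℝ := Real.sqrt (1 + b) / lam with hk
    have hkpos : 0 < k := by positivity
    have hlin : ∀ s ∈ Icc (0:ℝ) L, V'' s = k ^ 2 * V s := by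
      intro s hs
      have h := hODE s hs
      rw [max_eq_left (hsgn s hs)] at h
      have hk2 : k ^ 2 = (1 + b) / lam ^ 2 := by
        rw [hk, div_pow, hsqsq]
      rw [hk2]
      field_simp
      linarith
    obtain ⟨c₁, c₂, hsol⟩ := solve_linear L k hkpos V V' V'' hV hV' hlin
    refine ⟨c₁, c₂, fun s hs => ?_⟩
    have harg : s / (lam / Real.sqrt (1 + b)) = k * s := by
      rw [hk]
      field_simp
    rw [harg, hsol s hs]
  -- the nonpositive-boundary case
  have hneg_case : V 0 ≤ 0 → V L ≤ 0 → ∃ c₁ c₂ : ℝ, ∀ s ∈ Icc (0:ℝ) L,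
      V s = c₁ * Real.exp (s / lam) + c₂ * Real.exp (-(s / lam)) := by
    intro h0 hLv
    have hsgn : ∀ s ∈ Icc (0:ℝ) L, 0 ≤ -V s := by
      apply max_principle L ((1 + b) / lam ^ 2) (by positivity)
        (fun s => -V s) (fun s => -V' s) (fun s => -V'' s)
        (fun s hs => (hV s hs).neg) (fun s hs => (hV' s hs).neg) _
        (by simpa using h0) (by simpa using hLv)
      intro s hs hle
      have hge : 0 ≤ V s := by simpa using hle
      have h := hODE s hs
      rw [max_eq_left hge] at h
      field_simp
      linarith
    have hsgn' : ∀ s ∈ Icc (0:ℝ) L, V s ≤ 0 := fun s hs => by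
      have := hsgn s hs; linarith
    set k : ℝ := 1 / lam with hk
    have hkpos : 0 < k := by positivity
    have hlin : ∀ s ∈ Icc (0:ℝ) L, V'' s = k ^ 2 * V s := by
      intro s hs
      have h := hODE s hs
      rw [max_eq_right (hsgn' s hs)] at h
      rw [hk]
      field_simp
      linarith
    obtain ⟨c₁, c₂, hsol⟩ := solve_linear L k hkpos V V' V'' hV hV' hlin
    refine ⟨c₁, c₂, fun s hs => ?_⟩
    have harg : s / lam = k * s := by
      rw [hk]; field_simp
    rw [harg, hsol s hs]
  refine ⟨?_, hpos_case, hneg_case⟩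
  rcases mul_nonneg_iff.mp hsign with ⟨h1, h2⟩ | ⟨h1, h2⟩
  · obtain ⟨c₁, c₂, hsol⟩ := hpos_case h1 h2
    exact ⟨c₁, c₂, lam / Real.sqrt (1 + b), by positivity, hsol⟩
  · obtain ⟨c₁, c₂, hsol⟩ := hneg_case h1 h2
    exact ⟨c₁, c₂, lam, hlam, hsol⟩
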